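/- Let A_k with a_1 = 1 be a symmetric basis (a_i + a_{k-i} = a_k for 1 ≤ i ≤ k-1) that is h_0-admissible, i.e., every integer 0 ≤ x ≤ a_k is a sum of at most h_0 elements of A_k with h_0 ≥ 2. Then there exists h_1 with h_0 ≤ h_1 ≤ 2h_0 − 2 such that every integer 0 ≤ x ≤ h_1·a_k is a sum of at most h_1 elements of A_k, i.e., n(h_1, A_k) = h_1·a_k. -/

import Mathlib

/-- `n` is a sum of at most `h` elements of the basis `a 1, …, a k`
(repetition allowed), expressed with coefficients. -/
def RepIdx (a : ℕ → ℕ) (k h n : ℕ) : Prop :=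
  ∃ c : ℕ → ℕ, (∑ i ∈ Finset.Icc 1 k, c i) ≤ h ∧
    (∑ i ∈ Finset.Icc 1 k, c i * a i) = n

theorem stmt5 (a : ℕ → ℕ) (k h₀ : ℕ) (hk : 2 ≤ k) (hh0 : 2 ≤ h₀)
    (ha1 : a 1 = 1)
    (hmono : ∀ i j, 1 ≤ i → i < j → j ≤ k → a i < a j)
    (hsymm : ∀ i, 1 ≤ i → i ≤ k - 1 → a i + a (k - i) = a k)
    (hcov : ∀ x, x ≤ a k → RepIdx a k h₀ x) :
    ∃ h₁, h₀ ≤ h₁ ∧ h₁ ≤ 2 * h₀ - 2 ∧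
      ∀ x, x ≤ h₁ * a k → RepIdx a k h₁ x := by
  have hA : 1 < a k := by
    have := hmono 1 k le_rfl (by omega) le_rfl
    omega
  refine ⟨2 * h₀ - 2, by omega, le_rfl, ?_⟩
  intro x hx
  set A := a k with hAdef
  set q := x / A with hqdef
  set r := x % A with hrdef
  have hxqr : x = q * A + r := by
    rw [Nat.mul_comm]; exact (Nat.div_add_mod x A).symm
  have hrA : r < A := Nat.mod_lt _ (by omega)
  have hkmem : k ∈ Finset.Icc 1 k := by
    simp [Finset.mem_Icc]; omega
  have hsplit : ∀ f : ℕ → ℕ,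
      (∑ i ∈ Finset.Icc 1 k, f i)
        = (∑ i ∈ Finset.Icc 1 (k - 1), f i) + f k := by
    intro f
    have h := Finset.sum_Icc_succ_top (a := 1) (b := k - 1) (by omega) f
    rwa [show k - 1 + 1 = k from by omega] at h
  by_cases hr0 : r = 0
  · -- x = q * A
    have hq : q ≤ 2 * h₀ - 2 := by
      have : q * A ≤ (2 * h₀ - 2) * A := by omega
      exact Nat.le_of_mul_le_mul_right this (by omega)
    refine ⟨fun i => if i = k then q else 0, ?_, ?_⟩
    · rw [Finset.sum_ite_eq' (Finset.Icc 1 k) k (fun _ => q)]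
      simpa [hkmem] using hq
    · have : (∑ i ∈ Finset.Icc 1 k, (if i = k then q else 0) * a i)
          = ∑ i ∈ Finset.Icc 1 k, (if i = k then q * a i else 0) := by
        apply Finset.sum_congr rfl; intro i _; split <;> simp
      rw [this, Finset.sum_ite_eq' (Finset.Icc 1 k) k (fun i => q * a i)]
      simp only [hkmem, if_pos]
      rw [← hAdef]
      omega
  · -- r > 0
    have hqlt : q < 2 * h₀ - 2 := by
      by_contra hcon
      push_neg at hcon
      have : (2 * h₀ - 2) * A ≤ q * A := Nat.mul_le_mul_right _ hcon
      omega
    by_cases hq2 : q + 2 ≤ h₀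
    · -- small q : represent r directly, add q copies of A
      obtain ⟨c, hc1, hc2⟩ := hcov r (by omega)
      refine ⟨fun i => c i + (if i = k then q else 0), ?_, ?_⟩
      · rw [Finset.sum_add_distrib,
          Finset.sum_ite_eq' (Finset.Icc 1 k) k (fun _ => q)]
        simp only [hkmem, if_pos]
        omega
      · have : (∑ i ∈ Finset.Icc 1 k, (c i + if i = k then q else 0) * a i)
            = (∑ i ∈ Finset.Icc 1 k, c i * a i)
              + ∑ i ∈ Finset.Icc 1 k, (if i = k then q * a i else 0) := by
          rw [← Finset.sum_add_distrib]
          apply Finset.sum_congr rfl; intro i _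
          split <;> ring
        rw [this, hc2, Finset.sum_ite_eq' (Finset.Icc 1 k) k (fun i => q * a i)]
        simp only [hkmem, if_pos]
        rw [← hAdef]
        omega
    · -- large q : reflect a representation of A - r
      push_neg at hq2
      obtain ⟨c, hc1, hc2⟩ := hcov (A - r) (by omega)
      set m := ∑ i ∈ Finset.Icc 1 k, c i with hmdef
      have hDr : (∑ i ∈ Finset.Icc 1 k, c i * a i) + r = A := by omega
      -- c k = 0
      have hck : c k = 0 := by
        have hle : c k * a k ≤ ∑ i ∈ Finset.Icc 1 k, c i * a i :=
          Finset.single_le_sum (f := fun i => c i * a i) (fun i _ => Nat.zero_le _) hkmem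
        by_contra hne
        have : 1 * a k ≤ c k * a k := Nat.mul_le_mul_right _ (by omega)
        rw [← hAdef] at this hle
        omega
      have hm' : (∑ i ∈ Finset.Icc 1 (k - 1), c i) = m := by
        rw [hmdef, hsplit, hck]
        omega
      have hD' : (∑ i ∈ Finset.Icc 1 (k - 1), c i * a i) + r = A := by
        rw [← hDr, hsplit (fun i => c i * a i), hck]
        ring
      -- key symmetric identity
      have hkey : (∑ j ∈ Finset.Icc 1 (k - 1), c j * a (k - j))
          + (∑ j ∈ Finset.Icc 1 (k - 1), c j * a j) = m * A := by
        rw [← Finset.sum_add_distrib, ← hm', Finset.sum_mul]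
        apply Finset.sum_congr rfl
        intro j hj
        rw [Finset.mem_Icc] at hj
        rw [← Nat.mul_add, Nat.add_comm (a (k - j)), hsymm j hj.1 hj.2]
      obtain ⟨t, ht⟩ : ∃ t, q + 1 = m + t := ⟨q + 1 - m, by omega⟩
      refine ⟨fun i => if i = k then t else c (k - i), ?_, ?_⟩
      · rw [hsplit]
        have hckt : (if k = k then t else c (k - k)) = t := if_pos rfl
        rw [hckt]
        have h1 : (∑ i ∈ Finset.Icc 1 (k - 1), if i = k then t else c (k - i))
            = ∑ i ∈ Finset.Icc 1 (k - 1), c (k - i) := by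
          apply Finset.sum_congr rfl
          intro i hi
          rw [Finset.mem_Icc] at hi
          rw [if_neg (by omega)]
        rw [h1]
        have hre : (∑ i ∈ Finset.Icc 1 (k - 1), c (k - i))
            = ∑ j ∈ Finset.Icc 1 (k - 1), c j := by
          apply Finset.sum_nbij' (fun i => k - i) (fun j => k - j) <;>
            intro i hi <;> rw [Finset.mem_Icc] at hi <;>
            first
              | (rw [Finset.mem_Icc]; omega)
              | omega
              | (congr 1; omega)
        rw [hre, hm']
        omega
      · rw [hsplit (fun i => (if i = k then t else c (k - i)) * a i)]
        have hckt : (if k = k then t else c (k - k)) * a k = t * A := by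
          rw [if_pos rfl, ← hAdef]
        rw [hckt]
        have h1 : (∑ i ∈ Finset.Icc 1 (k - 1),
              (if i = k then t else c (k - i)) * a i)
            = ∑ i ∈ Finset.Icc 1 (k - 1), c (k - i) * a i := by
          apply Finset.sum_congr rfl
          intro i hi
          rw [Finset.mem_Icc] at hi
          rw [if_neg (by omega)]
        rw [h1]
        have hre : (∑ i ∈ Finset.Icc 1 (k - 1), c (k - i) * a i)
            = ∑ j ∈ Finset.Icc 1 (k - 1), c j * a (k - j) := by
          apply Finset.sum_nbij' (fun i => k - i) (fun j => k - j) <;>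
            intro i hi <;> rw [Finset.mem_Icc] at hi <;>
            first
              | (rw [Finset.mem_Icc]; omega)
              | omega
              | (congr 2 <;> omega)
        rw [hre]
        set S := ∑ j ∈ Finset.Icc 1 (k - 1), c j * a (k - j) with hSdef
        set D := ∑ j ∈ Finset.Icc 1 (k - 1), c j * a j with hDdef
        have e1 : S + D = m * A := hkey
        have e2 : D + r = A := hD'
        have h3 : (q + 1) * A = m * A + t * A := by rw [ht, Nat.add_mul]
        have h4 : (q + 1) * A = q * A + A := by ring
        omega
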